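/- Let Ω ⊂ ℝ² be a bounded domain and let u, v ∈ L²(Ω) be conjugate harmonic functions satisfying the Cauchy–Riemann equations ∇u = ∇⊥v on Ω, with d_Ω ∇u ∈ L²(Ω). Then ‖d_Ω ∇u‖_{L²(Ω)} ≤ 2 ‖v‖_{L²(Ω)}. -/

import Mathlib

/-!
STATEMENT 2: For a bounded planar domain Ω and conjugate harmonic u, v ∈ L²(Ω)
(Cauchy–Riemann equations ∇u = ∇⊥v) with d_Ω ∇u ∈ L²(Ω), one has
‖d_Ω ∇u‖_{L²(Ω)} ≤ 2 ‖v‖_{L²(Ω)}.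
-/

open MeasureTheory

noncomputable section

/-- The plane ℝ². -/
abbrev E2 := EuclideanSpace ℝ (Fin 2)

/-- Partial derivative of `f` in the `i`-th coordinate direction. -/
noncomputable def pd (f : E2 → ℝ) (i : Fin 2) (x : E2) : ℝ :=
  fderiv ℝ f x (EuclideanSpace.single i 1)

/-- Distance from `x` to the boundary of `Ω`. -/
noncomputable def dB (Ω : Set E2) (x : E2) : ℝ :=
  Metric.infDist x (frontier Ω)

/-- Squared euclidean norm of the (classical) gradient of `f` at `x`. -/
noncomputable def gradSq (f : E2 → ℝ) (x : E2) : ℝ := ∑ i, pd f i x ^ 2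

/-- `u` and `v` are conjugate harmonic on `Ω`: both are differentiable on `Ω` and satisfy
the Cauchy–Riemann equations `∇u = ∇⊥v = (∂₂ v, -∂₁ v)` there. -/
def CRPair (Ω : Set E2) (u v : E2 → ℝ) : Prop :=
  ∀ x ∈ Ω, DifferentiableAt ℝ u x ∧ DifferentiableAt ℝ v x ∧
    pd u 0 x = pd v 1 x ∧ pd u 1 x = - pd v 0 x

open Set Metric Function Filter
open scoped Convolution Pointwise

section Aux

-- basis vectors
noncomputable def e2 (i : Fin 2) : E2 := EuclideanSpace.single i (1:ℝ)

noncomputable def phiC : ℂ →L[ℝ] E2 :=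
  Complex.reCLM.smulRight (e2 0) + Complex.imCLM.smulRight (e2 1)

noncomputable def zetaC : E2 →L[ℝ] ℂ :=
  (EuclideanSpace.proj (0 : Fin 2)).smulRight (1 : ℂ) +
    (EuclideanSpace.proj (1 : Fin 2)).smulRight Complex.I

@[simp] lemma phiC_apply_zero (w : ℂ) : phiC w 0 = w.re := by
  simp [phiC, e2, EuclideanSpace.single_apply]

@[simp] lemma phiC_apply_one (w : ℂ) : phiC w 1 = w.im := by
  simp [phiC, e2, EuclideanSpace.single_apply]

@[simp] lemma zetaC_apply (x : E2) : zetaC x = (x 0 : ℂ) + (x 1 : ℂ) * Complex.I := by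
  simp [zetaC, Complex.real_smul]

@[simp] lemma phiC_zetaC (x : E2) : phiC (zetaC x) = x := by
  ext i
  fin_cases i <;> simp

@[simp] lemma zetaC_phiC (w : ℂ) : zetaC (phiC w) = w := by
  simp

@[simp] lemma zetaC_e2_zero : zetaC (e2 0) = 1 := by
  simp [e2, EuclideanSpace.single_apply]

@[simp] lemma zetaC_e2_one : zetaC (e2 1) = Complex.I := by
  simp [e2, EuclideanSpace.single_apply]

lemma e2_repr (w : E2) : w = w 0 • e2 0 + w 1 • e2 1 := by
  ext i
  fin_cases i <;> simp [e2, EuclideanSpace.single_apply]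

lemma clm_apply_repr (L : E2 →L[ℝ] ℝ) (w : E2) :
    L w = w 0 * L (e2 0) + w 1 * L (e2 1) := by
  conv_lhs => rw [e2_repr w]
  simp


-- derivative of `W ∘ zetaC` composed with re/im
lemma hasFDerivAt_comp_zetaC {W : ℂ → ℂ} {c : ℂ} {x : E2}
    (h : HasDerivAt W c (zetaC x)) :
    HasFDerivAt (fun y : E2 => W (zetaC y))
      ((((1 : ℂ →L[ℂ] ℂ).smulRight c).restrictScalars ℝ).comp zetaC) x :=
  (h.hasFDerivAt.restrictScalars ℝ).comp x zetaC.hasFDerivAt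

lemma pd_comp_re {W : ℂ → ℂ} {c : ℂ} {x : E2} (h : HasDerivAt W c (zetaC x)) (i : Fin 2) :
    pd (fun y => (W (zetaC y)).re) i x = (zetaC (e2 i) * c).re := by
  have h1 : HasFDerivAt (fun y : E2 => (W (zetaC y)).re)
      (Complex.reCLM.comp ((((1 : ℂ →L[ℂ] ℂ).smulRight c).restrictScalars ℝ).comp zetaC)) x :=
    (Complex.reCLM.hasFDerivAt.comp x (hasFDerivAt_comp_zetaC h))
  have h2 : pd (fun y => (W (zetaC y)).re) i x
      = (Complex.reCLM.comp ((((1 : ℂ →L[ℂ] ℂ).smulRight c).restrictScalars ℝ).comp zetaC))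
        (e2 i) := by
    rw [pd, h1.fderiv]; rfl
  rw [h2]
  simp [smul_eq_mul, mul_comm]

lemma pd_comp_im {W : ℂ → ℂ} {c : ℂ} {x : E2} (h : HasDerivAt W c (zetaC x)) (i : Fin 2) :
    pd (fun y => (W (zetaC y)).im) i x = (zetaC (e2 i) * c).im := by
  have h1 : HasFDerivAt (fun y : E2 => (W (zetaC y)).im)
      (Complex.imCLM.comp ((((1 : ℂ →L[ℂ] ℂ).smulRight c).restrictScalars ℝ).comp zetaC)) x :=
    (Complex.imCLM.hasFDerivAt.comp x (hasFDerivAt_comp_zetaC h))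
  have h2 : pd (fun y => (W (zetaC y)).im) i x
      = (Complex.imCLM.comp ((((1 : ℂ →L[ℂ] ℂ).smulRight c).restrictScalars ℝ).comp zetaC))
        (e2 i) := by
    rw [pd, h1.fderiv]; rfl
  rw [h2]
  simp [smul_eq_mul, mul_comm]

/-- main harmonicity bundle -/
lemma harmonic_bundle {Ω : Set E2} {u v : E2 → ℝ} (hopen : IsOpen Ω) (huv : CRPair Ω u v) :
    ∀ x ∈ Ω, ContDiffAt ℝ 1 v x ∧ ContDiffAt ℝ 1 (pd v 0) x ∧ ContDiffAt ℝ 1 (pd v 1) x ∧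
      (pd (pd v 0) 0 x + pd (pd v 1) 1 x = 0) := by
  classical
  set F : ℂ → ℂ := fun w => (u (phiC w) : ℂ) + (v (phiC w) : ℂ) * Complex.I with hF
  set Ω' : Set ℂ := phiC ⁻¹' Ω with hΩ'
  have hΩ'open : IsOpen Ω' := hopen.preimage phiC.continuous
  -- F is complex differentiable on Ω'
  have hFd : ∀ w ∈ Ω', DifferentiableAt ℂ F w := by
    intro w hw
    obtain ⟨hu, hv, hcr1, hcr2⟩ := huv (phiC w) hw
    set Du := fderiv ℝ u (phiC w)
    set Dv := fderiv ℝ v (phiC w)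
    have h1 : HasFDerivAt (fun w : ℂ => u (phiC w)) (Du.comp phiC) w :=
      hu.hasFDerivAt.comp w phiC.hasFDerivAt
    have h2 : HasFDerivAt (fun w : ℂ => v (phiC w)) (Dv.comp phiC) w :=
      hv.hasFDerivAt.comp w phiC.hasFDerivAt
    have h1' : HasFDerivAt (fun w : ℂ => u (phiC w) • (1:ℂ))
        ((Du.comp phiC).smulRight (1:ℂ)) w := h1.smul_const (1:ℂ)
    have h2' : HasFDerivAt (fun w : ℂ => v (phiC w) • Complex.I)
        ((Dv.comp phiC).smulRight Complex.I) w := h2.smul_const Complex.I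
    have hFeq : F = fun w : ℂ => u (phiC w) • (1:ℂ) + v (phiC w) • Complex.I := by
      funext w'; simp [hF, Complex.real_smul]
    have hL : HasFDerivAt F
        (((Du.comp phiC).smulRight (1:ℂ)) + ((Dv.comp phiC).smulRight Complex.I)) w := by
      rw [hFeq]; exact h1'.add h2' 
    set c : ℂ := (Du (e2 0) : ℂ) + (Dv (e2 0) : ℂ) * Complex.I with hc
    have key : ((1 : ℂ →L[ℂ] ℂ).smulRight c).restrictScalars ℝ
        = ((Du.comp phiC).smulRight (1:ℂ)) + ((Dv.comp phiC).smulRight Complex.I) := by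
      apply ContinuousLinearMap.ext
      intro t
      have hDu : Du (phiC t) = t.re * Du (e2 0) + t.im * Du (e2 1) := by
        rw [clm_apply_repr Du (phiC t)]; simp
      have hDv : Dv (phiC t) = t.re * Dv (e2 0) + t.im * Dv (e2 1) := by
        rw [clm_apply_repr Dv (phiC t)]; simp
      have hu1 : Du (e2 1) = - Dv (e2 0) := hcr2
      have hv1 : Dv (e2 1) = Du (e2 0) := hcr1.symm
      simp only [ContinuousLinearMap.coe_restrictScalars', ContinuousLinearMap.add_apply,
        ContinuousLinearMap.smulRight_apply, ContinuousLinearMap.coe_comp', Function.comp_apply,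
        ContinuousLinearMap.one_apply]
      rw [hDu, hDv, hu1, hv1]
      apply Complex.ext <;> simp [hc, smul_eq_mul] <;> ring
    exact (hasFDerivAt_of_restrictScalars ℝ hL key).differentiableAt
  have hFD : DifferentiableOn ℂ F Ω' := fun w hw => (hFd w hw).differentiableWithinAt
  have hFan : AnalyticOnNhd ℂ F Ω' := hFD.analyticOnNhd hΩ'open
  set G := deriv F with hG
  have hGan : AnalyticOnNhd ℂ G Ω' := hFan.deriv
  set H := deriv G with hH
  -- v as the imaginary part
  have hvim : v = fun y : E2 => (F (zetaC y)).im := by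
    funext y; simp only [hF, phiC_zetaC]; simp
  have hure : u = fun y : E2 => (F (zetaC y)).re := by
    funext y; simp only [hF, phiC_zetaC]; simp
  intro x hx
  have hwx : zetaC x ∈ Ω' := by
    simp only [hΩ', Set.mem_preimage, phiC_zetaC]; exact hx
  have hFdx : HasDerivAt F (G (zetaC x)) (zetaC x) := (hFd _ hwx).hasDerivAt
  -- first derivatives of v on Ω agree with functions of G
  have heq0 : ∀ y ∈ Ω, pd v 0 y = (G (zetaC y)).im := by
    intro y hy
    have hwy : zetaC y ∈ Ω' := by
      simp only [hΩ', Set.mem_preimage, phiC_zetaC]; exact hy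
    rw [hvim, pd_comp_im ((hFd _ hwy).hasDerivAt) 0, zetaC_e2_zero, one_mul]
  have heq1 : ∀ y ∈ Ω, pd v 1 y = (G (zetaC y)).re := by
    intro y hy
    have hwy : zetaC y ∈ Ω' := by
      simp only [hΩ', Set.mem_preimage, phiC_zetaC]; exact hy
    rw [hvim, pd_comp_im ((hFd _ hwy).hasDerivAt) 1, zetaC_e2_one]
    simp [hG]
  -- eventual equality near x
  have hev0 : pd v 0 =ᶠ[nhds x] fun y => (G (zetaC y)).im :=
    Filter.eventually_of_mem (hopen.mem_nhds hx) heq0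
  have hev1 : pd v 1 =ᶠ[nhds x] fun y => (G (zetaC y)).re :=
    Filter.eventually_of_mem (hopen.mem_nhds hx) heq1
  have hGdx : DifferentiableAt ℂ G (zetaC x) := (hGan _ hwx).differentiableAt
  have hGdR : DifferentiableAt ℝ (fun y : E2 => G (zetaC y)) x :=
    (hGdx.restrictScalars ℝ).comp x zetaC.differentiableAt
  have hd0' : DifferentiableAt ℝ (fun y : E2 => (G (zetaC y)).im) x :=
    Complex.imCLM.differentiableAt.comp x hGdR
  have hd1' : DifferentiableAt ℝ (fun y : E2 => (G (zetaC y)).re) x :=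
    Complex.reCLM.differentiableAt.comp x hGdR
  have hd0 : DifferentiableAt ℝ (pd v 0) x := hd0'.congr_of_eventuallyEq hev0
  have hd1 : DifferentiableAt ℝ (pd v 1) x := hd1'.congr_of_eventuallyEq hev1
  have hGdAt : HasDerivAt G (H (zetaC x)) (zetaC x) := hGdx.hasDerivAt
  have hpd00 : pd (pd v 0) 0 x = (H (zetaC x)).im := by
    rw [pd, hev0.fderiv_eq, ← pd]
    rw [pd_comp_im hGdAt 0, zetaC_e2_zero, one_mul]
  have hpd11 : pd (pd v 1) 1 x = - (H (zetaC x)).im := by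
    rw [pd, hev1.fderiv_eq, ← pd]
    rw [pd_comp_re hGdAt 1, zetaC_e2_one]
    simp
  have hζsm : ContDiffAt ℝ 1 (fun y : E2 => zetaC y) x := zetaC.contDiff.contDiffAt
  have hFsm : ContDiffAt ℝ 1 F (zetaC x) :=
    ((hFan _ hwx).contDiffAt.of_le le_top).restrict_scalars ℝ
  have hGsm : ContDiffAt ℝ 1 G (zetaC x) :=
    ((hGan _ hwx).contDiffAt.of_le le_top).restrict_scalars ℝ
  have hvsm : ContDiffAt ℝ 1 v x := by
    rw [hvim]
    exact Complex.imCLM.contDiff.contDiffAt.comp x (hFsm.comp x hζsm)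
  have h0sm : ContDiffAt ℝ 1 (pd v 0) x := by
    refine ContDiffAt.congr_of_eventuallyEq ?_ hev0
    exact Complex.imCLM.contDiff.contDiffAt.comp x (hGsm.comp x hζsm)
  have h1sm : ContDiffAt ℝ 1 (pd v 1) x := by
    refine ContDiffAt.congr_of_eventuallyEq ?_ hev1
    exact Complex.reCLM.contDiff.contDiffAt.comp x (hGsm.comp x hζsm)
  exact ⟨hvsm, h0sm, h1sm, by rw [hpd00, hpd11]; ring⟩

lemma fderiv_zero_of_nmem_tsupport {f : ℝ × ℝ → ℝ} {x : ℝ × ℝ} (hx : x ∉ tsupport f) :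
    fderiv ℝ f x = 0 := by
  by_contra h
  exact hx (support_fderiv_subset ℝ (by simpa [Function.mem_support] using h))

lemma div_prod (f g : ℝ × ℝ → ℝ) (hf : ContDiff ℝ 1 f) (hg : ContDiff ℝ 1 g)
    (hfs : HasCompactSupport f) (hgs : HasCompactSupport g) :
    ∫ p : ℝ × ℝ, (fderiv ℝ f p (1, 0) + fderiv ℝ g p (0, 1)) = 0 := by
  have hK : IsCompact (tsupport f ∪ tsupport g) := hfs.union hgs
  obtain ⟨R, hR0, hKR⟩ : ∃ R > 0, tsupport f ∪ tsupport g ⊆ Metric.ball (0 : ℝ × ℝ) R := by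
    obtain ⟨R, hR⟩ := hK.isBounded.subset_ball (0 : ℝ × ℝ)
    exact ⟨max R 1, lt_max_of_lt_right one_pos,
      hR.trans (Metric.ball_subset_ball (le_max_left _ _))⟩
  set a : ℝ × ℝ := (-R, -R)
  set b : ℝ × ℝ := (R, R)
  have hle : a ≤ b := ⟨by simp [a, b]; linarith, by simp [a, b]; linarith⟩
  have hball : Metric.ball (0 : ℝ × ℝ) R ⊆ Icc a b := by
    intro p hp
    simp only [Metric.mem_ball, dist_zero_right, Prod.norm_def] at hp
    have h1 : |p.1| < R := lt_of_le_of_lt (le_max_left _ _) (by simpa using hp)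
    have h2 : |p.2| < R := lt_of_le_of_lt (le_max_right _ _) (by simpa using hp)
    rw [abs_lt] at h1 h2
    exact ⟨⟨by simpa [a] using h1.1.le, by simpa [a] using h2.1.le⟩,
      ⟨by simpa [b] using h1.2.le, by simpa [b] using h2.2.le⟩⟩
  have hdiv_cont : Continuous fun p : ℝ × ℝ => fderiv ℝ f p (1, 0) + fderiv ℝ g p (0, 1) := by
    have h1 : Continuous (fderiv ℝ f) := hf.continuous_fderiv one_ne_zero
    have h2 : Continuous (fderiv ℝ g) := hg.continuous_fderiv one_ne_zero
    exact ((ContinuousLinearMap.apply ℝ ℝ ((1:ℝ), (0:ℝ))).continuous.comp h1).add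
      ((ContinuousLinearMap.apply ℝ ℝ ((0:ℝ), (1:ℝ))).continuous.comp h2)
  have Hi : IntegrableOn (fun p : ℝ × ℝ => fderiv ℝ f p (1, 0) + fderiv ℝ g p (0, 1))
      (Icc a b) := hdiv_cont.continuousOn.integrableOn_compact isCompact_Icc
  have main := integral_divergence_prod_Icc_of_hasFDerivAt_off_countable_of_le f g
    (fderiv ℝ f) (fderiv ℝ g) a b hle ∅ countable_empty
    (hf.continuous.continuousOn) (hg.continuous.continuousOn)
    (fun x _ => (hf.differentiable one_ne_zero x).hasFDerivAt)
    (fun x _ => (hg.differentiable one_ne_zero x).hasFDerivAt) Hi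
  -- boundary terms vanish
  have hb2 : ∀ x : ℝ, g (x, b.2) = 0 := by
    intro x
    apply image_eq_zero_of_notMem_tsupport
    intro hmem
    have := hKR (Or.inr hmem)
    simp only [Metric.mem_ball, dist_zero_right, Prod.norm_def] at this
    have : |b.2| < R := lt_of_le_of_lt (le_max_right _ _) (by simpa using this)
    simp [b, abs_of_pos hR0] at this
  have ha2 : ∀ x : ℝ, g (x, a.2) = 0 := by
    intro x
    apply image_eq_zero_of_notMem_tsupport
    intro hmem
    have := hKR (Or.inr hmem)
    simp only [Metric.mem_ball, dist_zero_right, Prod.norm_def] at this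
    have : |a.2| < R := lt_of_le_of_lt (le_max_right _ _) (by simpa using this)
    simp [a, abs_of_pos hR0] at this
  have hb1 : ∀ y : ℝ, f (b.1, y) = 0 := by
    intro y
    apply image_eq_zero_of_notMem_tsupport
    intro hmem
    have := hKR (Or.inl hmem)
    simp only [Metric.mem_ball, dist_zero_right, Prod.norm_def] at this
    have : |b.1| < R := lt_of_le_of_lt (le_max_left _ _) (by simpa using this)
    simp [b, abs_of_pos hR0] at this
  have ha1 : ∀ y : ℝ, f (a.1, y) = 0 := by
    intro y
    apply image_eq_zero_of_notMem_tsupport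
    intro hmem
    have := hKR (Or.inl hmem)
    simp only [Metric.mem_ball, dist_zero_right, Prod.norm_def] at this
    have : |a.1| < R := lt_of_le_of_lt (le_max_left _ _) (by simpa using this)
    simp [a, abs_of_pos hR0] at this
  simp only [hb2, ha2, hb1, ha1, intervalIntegral.integral_zero, sub_zero, add_zero,
    zero_sub, neg_zero, zero_add] at main
  -- the integral over Icc a b is the integral over the whole space
  have huniv : ∫ p : ℝ × ℝ, (fderiv ℝ f p (1, 0) + fderiv ℝ g p (0, 1))
      = ∫ p in Icc a b, (fderiv ℝ f p (1, 0) + fderiv ℝ g p (0, 1)) := by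
    symm
    apply setIntegral_eq_integral_of_forall_compl_eq_zero
    intro x hx
    have hxK : x ∉ tsupport f ∪ tsupport g := fun h => hx (hball (hKR h))
    rw [fderiv_zero_of_nmem_tsupport (fun h => hxK (Or.inl h)),
      fderiv_zero_of_nmem_tsupport (fun h => hxK (Or.inr h))]
    simp
  rw [huniv, main]

def T2 : E2 ≃L[ℝ] ℝ × ℝ :=
  (EuclideanSpace.equiv (Fin 2) ℝ).trans (ContinuousLinearEquiv.finTwoArrow ℝ ℝ)

lemma T2_measurePreserving : MeasurePreserving (⇑T2) volume volume := by
  have h1 := EuclideanSpace.volume_preserving_symm_measurableEquiv_toLp (Fin 2)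
  have h2 := volume_preserving_finTwoArrow ℝ
  have h := h2.comp h1
  exact h

@[simp] lemma T2_e2_zero : T2 (e2 0) = (1, 0) := by
  simp [T2, e2, EuclideanSpace.single_apply]
  try rfl

@[simp] lemma T2_e2_one : T2 (e2 1) = (0, 1) := by
  simp [T2, e2, EuclideanSpace.single_apply]
  try rfl

lemma div_E2 (P Q : E2 → ℝ) (hP : ContDiff ℝ 1 P) (hQ : ContDiff ℝ 1 Q)
    (hPs : HasCompactSupport P) (hQs : HasCompactSupport Q) :
    ∫ x : E2, (pd P 0 x + pd Q 1 x) = 0 := by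
  set f : ℝ × ℝ → ℝ := P ∘ ⇑T2.symm with hfdef
  set g : ℝ × ℝ → ℝ := Q ∘ ⇑T2.symm with hgdef
  have hf : ContDiff ℝ 1 f := hP.comp T2.symm.contDiff
  have hg : ContDiff ℝ 1 g := hQ.comp T2.symm.contDiff
  have hfs : HasCompactSupport f := hPs.comp_homeomorph T2.symm.toHomeomorph
  have hgs : HasCompactSupport g := hQs.comp_homeomorph T2.symm.toHomeomorph
  have key : ∀ x : E2, pd P 0 x + pd Q 1 x
      = fderiv ℝ f (T2 x) (1, 0) + fderiv ℝ g (T2 x) (0, 1) := by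
    intro x
    have hdf : fderiv ℝ f (T2 x) = (fderiv ℝ P (T2.symm (T2 x))).comp
        (T2.symm : ℝ × ℝ →L[ℝ] E2) := by
      rw [hfdef]
      rw [fderiv_comp _ (hP.differentiable one_ne_zero _) T2.symm.differentiableAt]
      simp [ContinuousLinearEquiv.fderiv]
    have hdg : fderiv ℝ g (T2 x) = (fderiv ℝ Q (T2.symm (T2 x))).comp
        (T2.symm : ℝ × ℝ →L[ℝ] E2) := by
      rw [hgdef]
      rw [fderiv_comp _ (hQ.differentiable one_ne_zero _) T2.symm.differentiableAt]
      simp [ContinuousLinearEquiv.fderiv]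
    have h10 : T2.symm ((1:ℝ), (0:ℝ)) = e2 0 := by
      rw [← T2_e2_zero]; exact T2.symm_apply_apply _
    have h01 : T2.symm ((0:ℝ), (1:ℝ)) = e2 1 := by
      rw [← T2_e2_one]; exact T2.symm_apply_apply _
    rw [hdf, hdg]
    simp only [ContinuousLinearMap.coe_comp', Function.comp_apply,
      ContinuousLinearEquiv.coe_coe, h10, h01, T2.symm_apply_apply]
    rfl
  calc ∫ x : E2, (pd P 0 x + pd Q 1 x)
      = ∫ x : E2, (fun p => fderiv ℝ f p (1, 0) + fderiv ℝ g p (0, 1)) (T2 x) := by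
        exact integral_congr_ae (Filter.Eventually.of_forall key)
    _ = ∫ p : ℝ × ℝ, (fderiv ℝ f p (1, 0) + fderiv ℝ g p (0, 1)) :=
        T2_measurePreserving.integral_comp (T2.toHomeomorph.measurableEmbedding)
          (fun p => fderiv ℝ f p (1, 0) + fderiv ℝ g p (0, 1))
    _ = 0 := div_prod f g hf hg hfs hgs

lemma exists_smooth_approx (Ω : Set E2) (hopen : IsOpen Ω) (hbdd : Bornology.IsBounded Ω)
    {ε : ℝ} (hε : 0 < ε) :
    ∃ ψ : E2 → ℝ, ContDiff ℝ 1 ψ ∧ HasCompactSupport ψ ∧ tsupport ψ ⊆ Ω ∧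
      LipschitzWith 1 ψ ∧ ∀ x, |ψ x - Metric.infDist x Ωᶜ| ≤ ε := by
  classical
  set g : E2 → ℝ := fun x => Metric.infDist x Ωᶜ with hgdef
  have hgL : LipschitzWith 1 g := Metric.lipschitz_infDist_pt Ωᶜ
  set h : E2 → ℝ := fun x => max (g x - ε/2) 0 with hhdef
  have hh1 : LipschitzWith 1 (fun x => g x - ε/2) := by
    apply LipschitzWith.of_dist_le_mul
    intro x y
    simpa [Real.dist_eq, sub_sub_sub_cancel_right] using hgL.dist_le_mul x y
  have hhL : LipschitzWith 1 h := hh1.max_const 0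
  set ρb : ContDiffBump (0 : E2) := ⟨ε/8, ε/4, by positivity, by linarith⟩ with hρb
  set ρ : E2 → ℝ := ρb.normed volume with hρ
  have hρout : ρb.rOut = ε/4 := rfl
  set ψ : E2 → ℝ := ρ ⋆[ContinuousLinearMap.lsmul ℝ ℝ, volume] h with hψdef
  have hρcont : Continuous ρ := ρb.continuous_normed
  have hρcs : HasCompactSupport ρ := ρb.hasCompactSupport_normed
  have hψsmooth : ContDiff ℝ 1 ψ := by
    have := HasCompactSupport.contDiff_convolution_left (ContinuousLinearMap.lsmul ℝ ℝ) hρcs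
      (ρb.contDiff_normed (n := 1)) (hhL.continuous.locallyIntegrable (μ := volume))
    exact_mod_cast this
  -- support control
  set S : Set E2 := {x | ε/4 ≤ g x} with hS
  have hSclosed : IsClosed S := isClosed_le continuous_const hgL.continuous
  have hSΩ : S ⊆ Ω := by
    intro x hx
    by_contra hxΩ
    have : g x = 0 := Metric.infDist_zero_of_mem hxΩ
    have hx' : ε/4 ≤ g x := hx
    rw [this] at hx'
    linarith
  have hScompact : IsCompact S :=
    Metric.isCompact_of_isClosed_isBounded hSclosed (hbdd.subset hSΩ)
  have hsupp : tsupport ψ ⊆ S := by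
    have h1 : support ψ ⊆ support ρ + support h := support_convolution_subset ..
    have h2 : support ρ = Metric.ball (0:E2) (ε/4) := by
      rw [hρ, ρb.support_normed_eq, hρout]
    have h3 : support h ⊆ {x | ε/2 ≤ g x} := by
      intro x hx
      simp only [hhdef, Function.mem_support] at hx
      by_contra hc
      simp only [mem_setOf_eq, not_le] at hc
      exact hx (max_eq_right (by linarith))
    have h4 : support ψ ⊆ S := by
      refine h1.trans ?_
      rintro y ⟨t, ht, s, hs, rfl⟩
      rw [h2] at ht
      have hts : dist (g (t + s)) (g s) ≤ dist (t + s) s := by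
        simpa using hgL.dist_le_mul (t + s) s
      have h5 : dist (t + s) s = ‖t‖ := by
        simp [dist_eq_norm]
      have h6 : ε/2 ≤ g s := h3 hs
      have h7 : ‖t‖ < ε/4 := by simpa [dist_eq_norm] using ht
      have := abs_sub_abs_le_abs_sub (g (t+s)) (g s)
      rw [Real.dist_eq] at hts
      have : g s - g (t + s) ≤ ‖t‖ := by
        have := neg_abs_le (g (t+s) - g s)
        nlinarith [abs_nonneg (g (t+s) - g s), hts]
      show ε/4 ≤ g (t + s)
      linarith
    exact (closure_minimal h4 hSclosed : tsupport ψ ⊆ S)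
  have hψcs : HasCompactSupport ψ := hScompact.of_isClosed_subset (isClosed_tsupport ψ) hsupp
  -- Lipschitz bound
  have hint : ∀ x : E2, Integrable (fun t => ρ t • h (x - t)) volume := by
    intro x
    apply Continuous.integrable_of_hasCompactSupport
    · exact hρcont.smul (hhL.continuous.comp (continuous_const.sub continuous_id))
    · exact hρcs.smul_right
  have hψeval : ∀ x : E2, ψ x = ∫ t, ρ t • h (x - t) := by
    intro x
    rw [hψdef]
    exact convolution_def ..
  have hψL : LipschitzWith 1 ψ := by
    apply LipschitzWith.of_dist_le_mul
    intro x y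
    rw [dist_eq_norm, hψeval x, hψeval y, ← integral_sub (hint x) (hint y)]
    have hmaj : ∀ t : E2, ‖ρ t • h (x - t) - ρ t • h (y - t)‖ ≤ ρ t * dist x y := by
      intro t
      rw [← smul_sub]
      have h1 : ‖ρ t • (h (x - t) - h (y - t))‖ = ρ t * ‖h (x - t) - h (y - t)‖ := by
        rw [norm_smul, Real.norm_of_nonneg (ρb.nonneg_normed t)]
      rw [h1]
      apply mul_le_mul_of_nonneg_left _ (ρb.nonneg_normed t)
      have := hhL.dist_le_mul (x - t) (y - t)
      simpa [Real.dist_eq, dist_eq_norm, sub_sub_sub_cancel_right] using this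
    calc ‖∫ t, (ρ t • h (x - t) - ρ t • h (y - t))‖
        ≤ ∫ t, ‖ρ t • h (x - t) - ρ t • h (y - t)‖ := norm_integral_le_integral_norm _
      _ ≤ ∫ t, ρ t * dist x y := by
          apply integral_mono ((hint x).sub (hint y)).norm
          · exact (ρb.integrable_normed).mul_const _
          · exact hmaj
      _ = 1 * dist x y := by
          rw [integral_mul_const, ρb.integral_normed]
  -- closeness
  refine ⟨ψ, hψsmooth, hψcs, hsupp.trans hSΩ, hψL, ?_⟩
  intro x
  have hcl1 : |ψ x - h x| ≤ ε/4 := by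
    have harg : ∀ y ∈ ball x ρb.rOut, dist (h y) (h x) ≤ ε/4 := by
      intro y hy
      have h1 := hhL.dist_le_mul y x
      have h2 : dist y x < ρb.rOut := mem_ball.mp hy
      rw [hρout] at h2
      simp only [NNReal.coe_one, one_mul] at h1
      linarith
    have := ρb.dist_normed_convolution_le (μ := volume) (x₀ := x)
      (hhL.continuous.aestronglyMeasurable) harg
    rw [Real.dist_eq] at this
    exact this
  have hg0 : 0 ≤ g x := Metric.infDist_nonneg
  have hcl2 : |h x - g x| ≤ ε/2 := by
    rcases le_total (g x - ε/2) 0 with hc | hc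
    · have hhx : h x = 0 := max_eq_right hc
      rw [hhx, zero_sub, abs_neg, abs_of_nonneg hg0]
      linarith
    · have hhx : h x = g x - ε/2 := max_eq_left hc
      rw [hhx]
      have heq : g x - ε/2 - g x = -(ε/2) := by ring
      rw [heq, abs_neg, abs_of_nonneg (by linarith : (0:ℝ) ≤ ε/2)]
  calc |ψ x - g x| ≤ |ψ x - h x| + |h x - g x| := abs_sub_le _ _ _
    _ ≤ ε/4 + ε/2 := add_le_add hcl1 hcl2
    _ ≤ ε := by linarith

lemma dB_eq_infDist_compl {Ω : Set E2} (hopen : IsOpen Ω) (hbdd : Bornology.IsBounded Ω)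
    {x : E2} (hx : x ∈ Ω) : dB Ω x = Metric.infDist x Ωᶜ := by
  have hne : Ω ≠ univ := fun h => NormedSpace.unbounded_univ ℝ E2 (h ▸ hbdd)
  obtain ⟨y, hyf, hyd⟩ := exists_mem_frontier_infDist_compl_eq_dist hx hne
  have h1 : Metric.infDist x Ωᶜ ≤ dB Ω x := by
    apply infDist_le_infDist_of_subset _ ⟨y, hyf⟩
    rw [hopen.frontier_eq]
    exact fun z hz => hz.2
  have h2 : dB Ω x ≤ Metric.infDist x Ωᶜ := by
    rw [hyd]
    exact infDist_le_dist_of_mem hyf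
  linarith

/-- Cauchy-Schwarz for set integrals of real functions. -/
lemma integral_CS {α : Type*} [MeasurableSpace α] {μ : Measure α} {f g : α → ℝ}
    (hf : AEStronglyMeasurable f μ) (hg : AEStronglyMeasurable g μ)
    (hf2 : Integrable (fun x => f x ^ 2) μ) (hg2 : Integrable (fun x => g x ^ 2) μ)
    (hfn : 0 ≤ᵐ[μ] f) (hgn : 0 ≤ᵐ[μ] g) :
    ∫ x, f x * g x ∂μ ≤ Real.sqrt (∫ x, f x ^ 2 ∂μ) * Real.sqrt (∫ x, g x ^ 2 ∂μ) := by
  have hpq : Real.HolderConjugate 2 2 := Real.HolderConjugate.two_two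
  have hfm : MemLp f (ENNReal.ofReal 2) μ := by
    have : MemLp f 2 μ := (memLp_two_iff_integrable_sq hf).mpr hf2
    simpa [ENNReal.ofReal_ofNat] using this
  have hgm : MemLp g (ENNReal.ofReal 2) μ := by
    have : MemLp g 2 μ := (memLp_two_iff_integrable_sq hg).mpr hg2
    simpa [ENNReal.ofReal_ofNat] using this
  have := integral_mul_le_Lp_mul_Lq_of_nonneg hpq hfn hgn hfm hgm
  have h2 : ∀ (F : α → ℝ), (∫ x, F x ^ (2:ℝ) ∂μ) = ∫ x, F x ^ 2 ∂μ := by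
    intro F
    apply integral_congr_ae
    filter_upwards with x
    rw [← Real.rpow_natCast (F x) 2]
    norm_num
  rw [h2 f, h2 g] at this
  calc ∫ x, f x * g x ∂μ
      ≤ (∫ x, f x ^ 2 ∂μ) ^ ((1:ℝ)/2) * (∫ x, g x ^ 2 ∂μ) ^ ((1:ℝ)/2) := this
    _ = Real.sqrt (∫ x, f x ^ 2 ∂μ) * Real.sqrt (∫ x, g x ^ 2 ∂μ) := by
        rw [Real.sqrt_eq_rpow, Real.sqrt_eq_rpow]


lemma pd_mul {f g : E2 → ℝ} {x : E2} (hf : DifferentiableAt ℝ f x)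
    (hg : DifferentiableAt ℝ g x) (i : Fin 2) :
    pd (fun y => f y * g y) i x = pd f i x * g x + f x * pd g i x := by
  simp only [pd, fderiv_fun_mul hf hg, ContinuousLinearMap.add_apply,
    ContinuousLinearMap.smul_apply, smul_eq_mul]
  ring

lemma gradSq_eq (f : E2 → ℝ) : gradSq f = fun x => pd f 0 x ^ 2 + pd f 1 x ^ 2 := by
  funext x; simp [gradSq, Fin.sum_univ_two]

lemma fderiv_zero_of_nmem_tsupport' {f : E2 → ℝ} {x : E2} (hx : x ∉ tsupport f) :
    fderiv ℝ f x = 0 := by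
  by_contra h
  exact hx (support_fderiv_subset ℝ (by simpa [Function.mem_support] using h))

lemma vec2_coords (a b : ℝ) : (a • e2 0 + b • e2 1) 0 = a ∧ (a • e2 0 + b • e2 1) 1 = b := by
  constructor <;> simp [e2, EuclideanSpace.single_apply]

lemma vec2_norm (a b : ℝ) : ‖a • e2 0 + b • e2 1‖ = Real.sqrt (a ^ 2 + b ^ 2) := by
  rw [EuclideanSpace.norm_eq]
  congr 1
  rw [Fin.sum_univ_two, (vec2_coords a b).1, (vec2_coords a b).2]
  simp [sq_abs]

lemma clm_inner_bound {L : E2 →L[ℝ] ℝ} (hL : ‖L‖ ≤ 1) (a b : ℝ) :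
    |L (e2 0) * a + L (e2 1) * b| ≤ Real.sqrt (a ^ 2 + b ^ 2) := by
  have h1 : L (a • e2 0 + b • e2 1) = L (e2 0) * a + L (e2 1) * b := by
    rw [map_add, ContinuousLinearMap.map_smul, ContinuousLinearMap.map_smul,
      smul_eq_mul, smul_eq_mul]; ring
  calc |L (e2 0) * a + L (e2 1) * b| = ‖L (a • e2 0 + b • e2 1)‖ := by
        rw [h1]; rfl
    _ ≤ ‖L‖ * ‖a • e2 0 + b • e2 1‖ := L.le_opNorm _
    _ ≤ 1 * Real.sqrt (a ^ 2 + b ^ 2) := by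
        rw [vec2_norm]
        exact mul_le_mul_of_nonneg_right hL (Real.sqrt_nonneg _) |>.trans
          (le_of_eq rfl)
    _ = Real.sqrt (a ^ 2 + b ^ 2) := one_mul _

/-- The key integration-by-parts bound. -/
lemma key_bound {Ω : Set E2} (hopen : IsOpen Ω) {v : E2 → ℝ}
    (hv2 : IntegrableOn (fun x => v x ^ 2) Ω)
    (hhb : ∀ x ∈ Ω, ContDiffAt ℝ 1 v x ∧ ContDiffAt ℝ 1 (pd v 0) x ∧
      ContDiffAt ℝ 1 (pd v 1) x ∧ (pd (pd v 0) 0 x + pd (pd v 1) 1 x = 0))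
    {ψ : E2 → ℝ} (hψc1 : ContDiff ℝ 1 ψ) (hψcs : HasCompactSupport ψ)
    (hψΩ : tsupport ψ ⊆ Ω) (hψL : LipschitzWith 1 ψ) :
    IntegrableOn (fun x => ψ x ^ 2 * gradSq v x) Ω ∧
      ∫ x in Ω, ψ x ^ 2 * gradSq v x ≤ 4 * ∫ x in Ω, v x ^ 2 := by
  classical
  have hΩmeas : MeasurableSet Ω := hopen.measurableSet
  set K := tsupport ψ with hKdef
  have hK : IsCompact K := hψcs
  have hKcl : IsClosed K := isClosed_tsupport ψ
  set P : E2 → ℝ := fun y => ψ y * ψ y * v y * pd v 0 y with hPdef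
  set Q : E2 → ℝ := fun y => ψ y * ψ y * v y * pd v 1 y with hQdef
  set A : E2 → ℝ := fun x => ψ x ^ 2 * gradSq v x with hAdef
  set B : E2 → ℝ := fun x => 2 * ψ x * v x * (pd ψ 0 x * pd v 0 x + pd ψ 1 x * pd v 1 x)
    with hBdef
  -- P, Q are C¹
  have hC1 : ∀ (W : E2 → ℝ), (W = P ∨ W = Q) → ContDiff ℝ 1 W := by
    intro W hW
    rw [contDiff_iff_contDiffAt]
    intro x
    by_cases hx : x ∈ Ω
    · obtain ⟨hv1, h01, h11, _⟩ := hhb x hx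
      have hψat : ContDiffAt ℝ 1 ψ x := hψc1.contDiffAt
      rcases hW with rfl | rfl
      · exact ((hψat.mul hψat).mul hv1).mul h01
      · exact ((hψat.mul hψat).mul hv1).mul h11
    · have hxK : x ∉ K := fun h => hx (hψΩ h)
      have hev : W =ᶠ[nhds x] (fun _ => (0:ℝ)) := by
        filter_upwards [hKcl.isOpen_compl.mem_nhds hxK] with y hy
        have hψy : ψ y = 0 := image_eq_zero_of_notMem_tsupport hy
        rcases hW with rfl | rfl <;> simp [hPdef, hQdef, hψy]
      exact (contDiffAt_const (c := (0:ℝ))).congr_of_eventuallyEq hev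
  have hPc1 : ContDiff ℝ 1 P := hC1 P (Or.inl rfl)
  have hQc1 : ContDiff ℝ 1 Q := hC1 Q (Or.inr rfl)
  have hsuppP : ∀ (W : E2 → ℝ), (W = P ∨ W = Q) → HasCompactSupport W := by
    intro W hW
    apply hK.of_isClosed_subset (isClosed_tsupport W)
    apply closure_minimal _ hKcl
    intro y hy
    by_contra hyK
    have hψy : ψ y = 0 := image_eq_zero_of_notMem_tsupport hyK
    apply hy
    rcases hW with rfl | rfl <;> simp [hPdef, hQdef, hψy]
  have hPcs : HasCompactSupport P := hsuppP P (Or.inl rfl)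
  have hQcs : HasCompactSupport Q := hsuppP Q (Or.inr rfl)
  -- divergence theorem
  have hdiv0 : ∫ x : E2, (pd P 0 x + pd Q 1 x) = 0 := div_E2 P Q hPc1 hQc1 hPcs hQcs
  -- divergence vanishes off Ω
  have hdiv_supp : ∀ x ∉ Ω, pd P 0 x + pd Q 1 x = 0 := by
    intro x hx
    have hxP : x ∉ tsupport P := fun h => hx (hψΩ (by
      have := hsuppP P (Or.inl rfl)
      -- tsupport P ⊆ K
      have hsub : tsupport P ⊆ K := by
        apply closure_minimal _ hKcl
        intro y hy
        by_contra hyK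
        exact hy (by simp [hPdef, image_eq_zero_of_notMem_tsupport hyK])
      exact hsub h))
    have hxQ : x ∉ tsupport Q := fun h => hx (hψΩ (by
      have hsub : tsupport Q ⊆ K := by
        apply closure_minimal _ hKcl
        intro y hy
        by_contra hyK
        exact hy (by simp [hQdef, image_eq_zero_of_notMem_tsupport hyK])
      exact hsub h))
    simp [pd, fderiv_zero_of_nmem_tsupport' hxP, fderiv_zero_of_nmem_tsupport' hxQ]
  have hdivΩ : ∫ x in Ω, (pd P 0 x + pd Q 1 x) = 0 := by
    rw [setIntegral_eq_integral_of_forall_compl_eq_zero (fun x hx => hdiv_supp x hx)]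
    exact hdiv0
  -- the pointwise expansion of the divergence on Ω
  have hdiv_eq : ∀ x ∈ Ω, pd P 0 x + pd Q 1 x = A x + B x := by
    intro x hx
    obtain ⟨hv1, h01, h11, hharm⟩ := hhb x hx
    have hψd : DifferentiableAt ℝ ψ x := hψc1.differentiable one_ne_zero x
    have hvd : DifferentiableAt ℝ v x := hv1.differentiableAt one_ne_zero
    have h0d : DifferentiableAt ℝ (pd v 0) x := h01.differentiableAt one_ne_zero
    have h1d : DifferentiableAt ℝ (pd v 1) x := h11.differentiableAt one_ne_zero
    have hψψ : DifferentiableAt ℝ (fun y => ψ y * ψ y) x := hψd.mul hψd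
    have hψψv : DifferentiableAt ℝ (fun y => ψ y * ψ y * v y) x := hψψ.mul hvd
    have e1 : pd P 0 x = pd (fun y => ψ y * ψ y * v y) 0 x * pd v 0 x
        + (ψ x * ψ x * v x) * pd (pd v 0) 0 x := pd_mul hψψv h0d 0
    have e2' : pd Q 1 x = pd (fun y => ψ y * ψ y * v y) 1 x * pd v 1 x
        + (ψ x * ψ x * v x) * pd (pd v 1) 1 x := pd_mul hψψv h1d 1
    have e3 : ∀ i, pd (fun y => ψ y * ψ y * v y) i x
        = (pd ψ i x * ψ x + ψ x * pd ψ i x) * v x + (ψ x * ψ x) * pd v i x := by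
      intro i
      rw [pd_mul hψψ hvd i, pd_mul hψd hψd i]
    rw [e1, e2', e3 0, e3 1, hAdef, hBdef]
    simp only [gradSq_eq]
    have hharm' : pd (pd v 1) 1 x = - pd (pd v 0) 0 x := by linarith
    rw [hharm']
    ring
  -- continuity facts on Ω
  have hpdψcont : ∀ i, Continuous (pd ψ i) := by
    intro i
    have : Continuous (fderiv ℝ ψ) := hψc1.continuous_fderiv one_ne_zero
    exact (ContinuousLinearMap.apply ℝ ℝ (EuclideanSpace.single i 1)).continuous.comp this
  have hcontΩ : ∀ (W : E2 → ℝ), (W = A ∨ W = B ∨ W = fun x => |v x| * (|ψ x| * Real.sqrt (gradSq v x)))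
      → ContinuousOn W Ω := by
    intro W hW
    intro x hx
    obtain ⟨hv1, h01, h11, _⟩ := hhb x hx
    have hg : ContinuousAt (gradSq v) x := by
      rw [gradSq_eq]
      exact ((h01.continuousAt.pow 2).add (h11.continuousAt.pow 2))
    have hvc : ContinuousAt v x := hv1.continuousAt
    have hψc : ContinuousAt ψ x := hψc1.continuous.continuousAt
    rcases hW with rfl | rfl | rfl
    · exact ((hψc.pow 2).mul hg).continuousWithinAt
    · exact ((((continuousAt_const.mul hψc).mul hvc)).mul
        (((hpdψcont 0).continuousAt.mul h01.continuousAt).add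
          ((hpdψcont 1).continuousAt.mul h11.continuousAt))).continuousWithinAt
    · exact (hvc.abs.mul (hψc.abs.mul (Real.continuous_sqrt.continuousAt.comp hg))).continuousWithinAt
  -- vanishing off K and integrability on Ω
  have hvanish : ∀ (W : E2 → ℝ), (W = A ∨ W = B ∨ W = fun x => |v x| * (|ψ x| * Real.sqrt (gradSq v x)))
      → ∀ x ∉ K, W x = 0 := by
    intro W hW x hxK
    have hψy : ψ x = 0 := image_eq_zero_of_notMem_tsupport hxK
    rcases hW with rfl | rfl | rfl <;> simp [hAdef, hBdef, hψy]
  have hIntOn : ∀ (W : E2 → ℝ), (W = A ∨ W = B ∨ W = fun x => |v x| * (|ψ x| * Real.sqrt (gradSq v x)))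
      → IntegrableOn W Ω := by
    intro W hW
    have h1 : IntegrableOn W K := by
      apply ContinuousOn.integrableOn_compact hK
      exact (hcontΩ W hW).mono hψΩ
    have h2 : IntegrableOn W (Ω \ K) := by
      refine IntegrableOn.congr_fun (integrableOn_zero) ?_ (hΩmeas.diff hKcl.measurableSet)
      exact fun x hx => (hvanish W hW x hx.2).symm
    have h3 : IntegrableOn W (K ∪ (Ω \ K)) := h1.union h2
    exact h3.mono_set (fun y hy => by
      by_cases hyK : y ∈ K
      · exact Or.inl hyK
      · exact Or.inr ⟨hy, hyK⟩)
  set c : E2 → ℝ := fun x => |ψ x| * Real.sqrt (gradSq v x) with hcdef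
  have hAint : IntegrableOn A Ω := hIntOn A (Or.inl rfl)
  have hBint : IntegrableOn B Ω := hIntOn B (Or.inr (Or.inl rfl))
  have hMint : IntegrableOn (fun x => |v x| * (|ψ x| * Real.sqrt (gradSq v x))) Ω :=
    hIntOn _ (Or.inr (Or.inr rfl))
  have hgnn : ∀ x, 0 ≤ gradSq v x := fun x => Finset.sum_nonneg (fun i _ => sq_nonneg _)
  -- ∫ (A + B) = 0 on Ω
  have hsum : ∫ x in Ω, (A x + B x) = 0 := by
    rw [← hdivΩ]
    exact setIntegral_congr_fun hΩmeas (fun x hx => (hdiv_eq x hx).symm)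
  have hAB : ∫ x in Ω, A x = - ∫ x in Ω, B x := by
    rw [integral_add hAint hBint] at hsum
    linarith
  -- pointwise bound on B
  have hBbound : ∀ x, |B x| ≤ 2 * (|v x| * c x) := by
    intro x
    have hL : ‖fderiv ℝ ψ x‖ ≤ 1 := by
      have := norm_fderiv_le_of_lipschitz ℝ hψL (x₀ := x)
      simpa using this
    have hinner : |pd ψ 0 x * pd v 0 x + pd ψ 1 x * pd v 1 x|
        ≤ Real.sqrt (gradSq v x) := by
      have := clm_inner_bound hL (pd v 0 x) (pd v 1 x)
      rw [gradSq_eq]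
      exact this
    have habs : |B x| = 2 * |ψ x| * |v x| * |pd ψ 0 x * pd v 0 x + pd ψ 1 x * pd v 1 x| := by
      simp only [hBdef]
      rw [abs_mul, abs_mul, abs_mul, abs_two]
    rw [habs]
    simp only [hcdef]
    calc 2 * |ψ x| * |v x| * |pd ψ 0 x * pd v 0 x + pd ψ 1 x * pd v 1 x|
        ≤ 2 * |ψ x| * |v x| * Real.sqrt (gradSq v x) := by
          apply mul_le_mul_of_nonneg_left hinner
          positivity
      _ = 2 * (|v x| * (|ψ x| * Real.sqrt (gradSq v x))) := by ring
  -- ∫ A ≤ 2 ∫ |v| c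
  have h1 : ∫ x in Ω, A x ≤ 2 * ∫ x in Ω, (|v x| * c x) := by
    rw [hAB]
    have h2 : - ∫ x in Ω, B x ≤ ‖∫ x in Ω, B x‖ := by
      rw [Real.norm_eq_abs]; exact neg_le_abs _
    refine h2.trans ?_
    refine (norm_integral_le_integral_norm _).trans ?_
    have h3 : ∫ x in Ω, ‖B x‖ ≤ ∫ x in Ω, 2 * (|v x| * c x) := by
      apply integral_mono hBint.norm
      · exact (hMint.const_mul 2)
      · intro x
        simpa [Real.norm_eq_abs] using hBbound x
    refine h3.trans ?_
    rw [integral_const_mul]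
  -- measurability for Cauchy-Schwarz
  have hvmeas : AEStronglyMeasurable (fun x => |v x|) (volume.restrict Ω) := by
    have : ContinuousOn v Ω := fun x hx => (hhb x hx).1.continuousAt.continuousWithinAt
    exact (this.aestronglyMeasurable hΩmeas).norm.congr
      (Filter.Eventually.of_forall (fun x => (Real.norm_eq_abs (v x))))
  have hcmeas : AEStronglyMeasurable c (volume.restrict Ω) := by
    have hco : ContinuousOn c Ω := by
      intro x hx
      obtain ⟨hv1, h01, h11, _⟩ := hhb x hx
      have hg : ContinuousAt (gradSq v) x := by
        rw [gradSq_eq]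
        exact ((h01.continuousAt.pow 2).add (h11.continuousAt.pow 2))
      exact ((hψc1.continuous.continuousAt.abs).mul
        (Real.continuous_sqrt.continuousAt.comp hg)).continuousWithinAt
    exact hco.aestronglyMeasurable hΩmeas
  have hv2' : Integrable (fun x => |v x| ^ 2) (volume.restrict Ω) := by
    have : (fun x => |v x| ^ 2) = fun x => v x ^ 2 := by
      funext x; rw [sq_abs]
    rw [this]; exact hv2
  have hc2 : Integrable (fun x => c x ^ 2) (volume.restrict Ω) := by
    have : (fun x => c x ^ 2) = A := by
      funext x
      simp only [hcdef, hAdef]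
      rw [mul_pow, sq_abs, Real.sq_sqrt (hgnn x)]
    rw [this]; exact hAint
  have hCS := integral_CS hvmeas hcmeas hv2' hc2
    (Filter.Eventually.of_forall (fun x => abs_nonneg _))
    (Filter.Eventually.of_forall (fun x => by
      rw [hcdef]; positivity))
  -- assemble
  have hc2A : ∫ x in Ω, c x ^ 2 = ∫ x in Ω, A x := by
    apply integral_congr_ae
    apply Filter.Eventually.of_forall
    intro x
    simp only [hcdef, hAdef]
    rw [mul_pow, sq_abs, Real.sq_sqrt (hgnn x)]
  have hvabs2 : ∫ x in Ω, |v x| ^ 2 = ∫ x in Ω, v x ^ 2 := by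
    apply integral_congr_ae
    apply Filter.Eventually.of_forall
    intro x
    exact sq_abs (v x)
  rw [hc2A, hvabs2] at hCS
  set t := ∫ x in Ω, A x with htdef
  set IV := ∫ x in Ω, v x ^ 2 with hIVdef
  have ht0 : 0 ≤ t := by
    apply setIntegral_nonneg hΩmeas
    intro x hx
    simp only [hAdef]
    have := hgnn x
    positivity
  have hIV0 : 0 ≤ IV := by
    apply setIntegral_nonneg hΩmeas
    intro x hx
    positivity
  have hkey : t ≤ 2 * (Real.sqrt IV * Real.sqrt t) := by
    calc t ≤ 2 * ∫ x in Ω, (|v x| * c x) := h1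
      _ ≤ 2 * (Real.sqrt IV * Real.sqrt t) := by
          apply mul_le_mul_of_nonneg_left _ (by norm_num : (0:ℝ) ≤ 2)
          exact hCS
  have hfinal : t ≤ 4 * IV := by
    have hst := Real.sq_sqrt ht0
    have hsIV := Real.sq_sqrt hIV0
    nlinarith [sq_nonneg (Real.sqrt t - 2 * Real.sqrt IV), Real.sqrt_nonneg t,
      Real.sqrt_nonneg IV]
  exact ⟨hAint, hfinal⟩

lemma measurable_gradSq (f : E2 → ℝ) : Measurable (gradSq f) := by
  rw [gradSq_eq]
  apply Measurable.add
  · exact (measurable_fderiv_apply_const ℝ f _).pow_const 2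
  · exact (measurable_fderiv_apply_const ℝ f _).pow_const 2

end Aux

/-- For a bounded planar domain `Ω` and square integrable conjugate
harmonic functions `u, v` with `d_Ω ∇u ∈ L²(Ω)`, we have `‖d_Ω ∇u‖ ≤ 2 ‖v‖`. -/
theorem distGrad_le_two_conjugate
    (Ω : Set E2) (hopen : IsOpen Ω) (hconn : IsConnected Ω)
    (hbdd : Bornology.IsBounded Ω)
    (u v : E2 → ℝ) (huv : CRPair Ω u v)
    (hu2 : IntegrableOn (fun x => u x ^ 2) Ω)
    (hv2 : IntegrableOn (fun x => v x ^ 2) Ω)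
    (hdu : IntegrableOn (fun x => dB Ω x ^ 2 * gradSq u x) Ω) :
    Real.sqrt (∫ x in Ω, dB Ω x ^ 2 * gradSq u x) ≤
      2 * Real.sqrt (∫ x in Ω, v x ^ 2) := by
  classical
  have hΩmeas : MeasurableSet Ω := hopen.measurableSet
  have hhb := harmonic_bundle hopen huv
  have hgrad_eq : ∀ x ∈ Ω, gradSq u x = gradSq v x := by
    intro x hx
    obtain ⟨_, _, h1, h2⟩ := huv x hx
    simp only [gradSq_eq]
    rw [h1, h2]
    ring
  have hgnn : ∀ x, 0 ≤ gradSq v x := fun x => Finset.sum_nonneg fun i _ => sq_nonneg _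
  set IV := ∫ x in Ω, v x ^ 2 with hIV
  have hIV0 : 0 ≤ IV := setIntegral_nonneg hΩmeas (fun x _ => sq_nonneg _)
  -- approximating sequence of smooth 1-Lipschitz compactly supported functions
  have happrox : ∀ k : ℕ, ∃ ψ : E2 → ℝ, ContDiff ℝ 1 ψ ∧ HasCompactSupport ψ ∧
      tsupport ψ ⊆ Ω ∧ LipschitzWith 1 ψ ∧
      ∀ x, |ψ x - Metric.infDist x Ωᶜ| ≤ 1/((k:ℝ)+1) := by
    intro k
    exact exists_smooth_approx Ω hopen hbdd (by positivity)
  choose ψs hψc1 hψcs hψΩ hψL hψnear using happrox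
  have hbound : ∀ k, IntegrableOn (fun x => ψs k x ^ 2 * gradSq v x) Ω ∧
      ∫ x in Ω, ψs k x ^ 2 * gradSq v x ≤ 4 * IV := fun k =>
    key_bound hopen hv2 hhb (hψc1 k) (hψcs k) (hψΩ k) (hψL k)
  -- pointwise convergence of ψs k to dB on Ω
  have hconv : ∀ x ∈ Ω, Filter.Tendsto (fun k : ℕ => ψs k x) atTop (nhds (dB Ω x)) := by
    intro x hx
    rw [dB_eq_infDist_compl hopen hbdd hx]
    have h0 : Filter.Tendsto (fun k : ℕ => 1/((k:ℝ)+1)) atTop (nhds 0) :=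
      tendsto_one_div_add_atTop_nhds_zero_nat
    have h1 : Filter.Tendsto (fun k : ℕ => ψs k x - Metric.infDist x Ωᶜ) atTop (nhds 0) := by
      apply squeeze_zero_norm (fun k => ?_) h0
      rw [Real.norm_eq_abs]
      exact hψnear k x
    have := h1.add (tendsto_const_nhds (x := Metric.infDist x Ωᶜ) (f := atTop))
    simpa using this
  set D : E2 → ℝ := fun x => dB Ω x ^ 2 * gradSq v x with hDdef
  have hDint : IntegrableOn D Ω := by
    refine hdu.congr_fun (fun x hx => ?_) hΩmeas
    simp only [hDdef]
    rw [hgrad_eq x hx]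
  have hInteq : ∫ x in Ω, dB Ω x ^ 2 * gradSq u x = ∫ x in Ω, D x := by
    refine setIntegral_congr_fun hΩmeas (fun x hx => ?_)
    simp only [hDdef]
    rw [hgrad_eq x hx]
  have hDnn : ∀ x, 0 ≤ D x := fun x => mul_nonneg (sq_nonneg _) (hgnn x)
  -- Fatou argument
  have hlin : (∫⁻ x in Ω, ENNReal.ofReal (D x)) ≤ ENNReal.ofReal (4 * IV) := by
    have hmeask : ∀ k : ℕ, Measurable fun x => ENNReal.ofReal (ψs k x ^ 2 * gradSq v x) := by
      intro k
      apply ENNReal.measurable_ofReal.comp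
      exact (((hψc1 k).continuous.measurable).pow_const 2).mul (measurable_gradSq v)
    have hpt : ∀ᵐ x ∂(volume.restrict Ω), ENNReal.ofReal (D x)
        = Filter.liminf (fun k : ℕ => ENNReal.ofReal (ψs k x ^ 2 * gradSq v x)) atTop := by
      rw [ae_restrict_iff' hΩmeas]
      apply Filter.Eventually.of_forall
      intro x hx
      have h1 : Filter.Tendsto (fun k : ℕ => ψs k x ^ 2 * gradSq v x) atTop
          (nhds (dB Ω x ^ 2 * gradSq v x)) := ((hconv x hx).pow 2).mul_const _
      have h2 : Filter.Tendsto (fun k : ℕ => ENNReal.ofReal (ψs k x ^ 2 * gradSq v x)) atTop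
          (nhds (ENNReal.ofReal (D x))) := (ENNReal.continuous_ofReal.tendsto _).comp h1
      exact h2.liminf_eq.symm
    calc (∫⁻ x in Ω, ENNReal.ofReal (D x))
        = ∫⁻ x in Ω, Filter.liminf
            (fun k : ℕ => ENNReal.ofReal (ψs k x ^ 2 * gradSq v x)) atTop :=
          lintegral_congr_ae hpt
      _ ≤ Filter.liminf
            (fun k : ℕ => ∫⁻ x in Ω, ENNReal.ofReal (ψs k x ^ 2 * gradSq v x)) atTop :=
          lintegral_liminf_le hmeask
      _ ≤ ENNReal.ofReal (4 * IV) := by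
          have hk : ∀ k : ℕ, (∫⁻ x in Ω, ENNReal.ofReal (ψs k x ^ 2 * gradSq v x))
              ≤ ENNReal.ofReal (4 * IV) := by
            intro k
            have he : ENNReal.ofReal (∫ x in Ω, ψs k x ^ 2 * gradSq v x)
                = ∫⁻ x in Ω, ENNReal.ofReal (ψs k x ^ 2 * gradSq v x) :=
              ofReal_integral_eq_lintegral_ofReal (hbound k).1
                (Filter.Eventually.of_forall (fun x => by
                  have := hgnn x
                  positivity))
            rw [← he]
            exact ENNReal.ofReal_le_ofReal (hbound k).2
          refine le_trans (Filter.liminf_le_liminf (Filter.Eventually.of_forall hk)) ?_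
          rw [Filter.liminf_const]
  have hint_eq : ∫ x in Ω, D x = (∫⁻ x in Ω, ENNReal.ofReal (D x)).toReal := by
    rw [integral_eq_lintegral_of_nonneg_ae (Filter.Eventually.of_forall hDnn)
      hDint.aestronglyMeasurable]
  have hDle : ∫ x in Ω, D x ≤ 4 * IV := by
    rw [hint_eq]
    have h := ENNReal.toReal_mono (ENNReal.ofReal_ne_top) hlin
    rwa [ENNReal.toReal_ofReal (by positivity)] at h
  rw [hInteq]
  calc Real.sqrt (∫ x in Ω, D x) ≤ Real.sqrt (4 * IV) := Real.sqrt_le_sqrt hDle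
    _ = 2 * Real.sqrt IV := by
        rw [show (4:ℝ) * IV = 2 ^ 2 * IV by ring, Real.sqrt_mul (by positivity) IV,
          Real.sqrt_sq (by norm_num : (0:ℝ) ≤ 2)]


end
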